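/- Let G be a group with decidable word problem, generated by a finite set X, and let M be the submonoid of G generated by a finite set S. Then membership in M is decidable if and only if there exists a computable non-decreasing function δ : ℕ → ℕ such that every g ∈ M satisfies |g|_S ≤ δ(|g|_X), where |g|_S is the minimal S-length of g in M and |g|_X the word length of g in G over X ∪ X⁻¹. -/

import Mathlib

/-- Evaluation of a word over the generators `gens` (with `true` = generator,
`false` = inverse) in the group `G`. -/
def evalWord {G : Type*} [Group G] {n : ℕ} (gens : Fin n → G)
    (w : List (Fin n × Bool)) : G :=
  (w.map (fun p => if p.2 then gens p.1 else (gens p.1)⁻¹)).prod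

/-- Word length of `g` with respect to the group generators `gens` (and their inverses). -/
noncomputable def wordLen {G : Type*} [Group G] {n : ℕ} (gens : Fin n → G) (g : G) : ℕ :=
  sInf {k | ∃ w : List (Fin n × Bool), evalWord gens w = g ∧ w.length = k}

/-- Minimal length of `g` as a product of elements of `S`. -/
noncomputable def genLen {G : Type*} [Monoid G] (S : Set G) (g : G) : ℕ :=
  sInf {k | ∃ l : List G, (∀ a ∈ l, a ∈ S) ∧ l.prod = g ∧ l.length = k}

namespace Stmt6Aux

open Encodable

theorem pair_mono {a a' b b' : ℕ} (ha : a ≤ a') (hb : b ≤ b') :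
    Nat.pair a b ≤ Nat.pair a' b' := by
  calc Nat.pair a b ≤ Nat.pair a' b := by
        rcases ha.lt_or_eq with h | h
        · exact (Nat.pair_lt_pair_left b h).le
        · rw [h]
       _ ≤ Nat.pair a' b' := by
        rcases hb.lt_or_eq with h | h
        · exact (Nat.pair_lt_pair_right a' h).le
        · rw [h]

/-- Bound on encodings of lists of length ≤ m whose elements have encoding ≤ c. -/
def boundL (c : ℕ) (m : ℕ) : ℕ :=
  m.rec 0 fun _ IH => Nat.pair c IH + 1

theorem boundL_mono (c : ℕ) : Monotone (boundL c) := by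
  apply monotone_nat_of_le_succ
  intro m
  induction m with
  | zero => exact Nat.zero_le _
  | succ m ih =>
    show Nat.pair c (boundL c m) + 1 ≤ Nat.pair c (boundL c (m+1)) + 1
    exact Nat.succ_le_succ (pair_mono le_rfl ih)

theorem boundL_computable (c : ℕ) : Computable (boundL c) := by
  have := Computable.nat_rec Computable.id (Computable.const 0)
    (Computable₂.mk (α := ℕ) (β := ℕ × ℕ)
      (f := fun _ p => Nat.pair c p.2 + 1)
      (Computable.succ.comp ((Primrec₂.natPair.to_comp).comp
        (Computable.const c) (Computable.snd.comp Computable.snd))))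
  exact this.of_eq fun m => rfl

theorem encode_le_boundL {α : Type*} [Primcodable α] {c : ℕ}
    (hc : ∀ a : α, encode a ≤ c) :
    ∀ (l : List α) (m : ℕ), l.length ≤ m → encode l ≤ boundL c m := by
  intro l
  induction l with
  | nil => intro m _; simp [Encodable.encode_list_nil]
  | cons a l ih =>
    intro m hm
    cases m with
    | zero => simp at hm
    | succ m =>
      rw [Encodable.encode_list_cons]
      have h1 : encode l ≤ boundL c m := ih m (by simpa using hm)
      exact Nat.succ_le_succ (pair_mono (hc a) h1)

/-- Bounded existential over Booleans. -/
def bany (f : ℕ → Bool) (N : ℕ) : Bool :=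
  N.rec (f 0) fun y IH => IH || f (y + 1)

theorem bany_eq_true {f : ℕ → Bool} {N : ℕ} :
    bany f N = true ↔ ∃ m ≤ N, f m = true := by
  induction N with
  | zero =>
    constructor
    · intro h; exact ⟨0, le_rfl, h⟩
    · rintro ⟨m, hm, h⟩; interval_cases m; exact h
  | succ N ih =>
    show (bany f N || f (N+1)) = true ↔ _
    rw [Bool.or_eq_true, ih]
    constructor
    · rintro (⟨m, hm, h⟩ | h)
      · exact ⟨m, hm.trans (Nat.le_succ N), h⟩
      · exact ⟨N+1, le_rfl, h⟩
    · rintro ⟨m, hm, h⟩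
      rcases Nat.le_succ_iff.mp hm with hm' | rfl
      · exact Or.inl ⟨m, hm', h⟩
      · exact Or.inr h

theorem bany_computable {α : Type*} [Primcodable α] {f : α → ℕ → Bool} {N : α → ℕ}
    (hf : Computable₂ f) (hN : Computable N) :
    Computable fun a => bany (f a) (N a) := by
  have hor : Computable₂ fun (x y : Bool) => x || y := (Primrec.dom_bool₂ _).to_comp
  have hh : Computable₂ fun (a : α) (p : ℕ × Bool) => p.2 || f a (p.1 + 1) :=
    hor.comp (Computable.snd.comp Computable.snd)
      (hf.comp Computable.fst (Computable.succ.comp (Computable.fst.comp Computable.snd)))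
  have := Computable.nat_rec hN (hf.comp Computable.id (Computable.const 0)) hh
  exact this.of_eq fun a => rfl

/-- Bounded maximum. -/
def bmaxf (f : ℕ → ℕ) (N : ℕ) : ℕ :=
  N.rec (f 0) fun y IH => max IH (f (y + 1))

theorem le_bmaxf {f : ℕ → ℕ} {m N : ℕ} (h : m ≤ N) : f m ≤ bmaxf f N := by
  induction N with
  | zero => interval_cases m; exact le_rfl
  | succ N ih =>
    show f m ≤ max (bmaxf f N) (f (N+1))
    rcases Nat.le_succ_iff.mp h with h' | rfl
    · exact le_max_of_le_left (ih h')
    · exact le_max_right _ _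

theorem bmaxf_mono {f g : ℕ → ℕ} (hfg : ∀ j, f j ≤ g j) {N N' : ℕ} (h : N ≤ N') :
    bmaxf f N ≤ bmaxf g N' := by
  have h1 : bmaxf f N ≤ bmaxf g N := by
    clear h
    induction N with
    | zero => exact hfg 0
    | succ N ih => exact max_le_max ih (hfg (N+1))
  have h2 : bmaxf g N ≤ bmaxf g N' := by
    induction h with
    | refl => exact le_rfl
    | step _ ih => exact ih.trans (le_max_left _ _)
  exact h1.trans h2

theorem bmaxf_computable {α : Type*} [Primcodable α] {f : α → ℕ → ℕ} {N : α → ℕ}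
    (hf : Computable₂ f) (hN : Computable N) :
    Computable fun a => bmaxf (f a) (N a) := by
  have hmax : Computable₂ fun (x y : ℕ) => max x y := Primrec.nat_max.to_comp
  have hh : Computable₂ fun (a : α) (p : ℕ × ℕ) => max p.2 (f a (p.1 + 1)) :=
    hmax.comp (Computable.snd.comp Computable.snd)
      (hf.comp Computable.fst (Computable.succ.comp (Computable.fst.comp Computable.snd)))
  have := Computable.nat_rec hN (hf.comp Computable.id (Computable.const 0)) hh
  exact this.of_eq fun a => rfl

section Words

variable {G : Type*} [Group G] {n k : ℕ} (X : Fin n → G) (S : Fin k → G)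

theorem evalWord_append (u v : List (Fin n × Bool)) :
    evalWord X (u ++ v) = evalWord X u * evalWord X v := by
  simp [evalWord]

/-- Formal inverse of a word. -/
def invw (w : List (Fin n × Bool)) : List (Fin n × Bool) :=
  (w.map fun p => (p.1, !p.2)).reverse

theorem evalWord_invw (w : List (Fin n × Bool)) :
    evalWord X (invw w) = (evalWord X w)⁻¹ := by
  induction w with
  | nil => simp [invw, evalWord]
  | cons p w ih =>
    have : invw (p :: w) = invw w ++ [(p.1, !p.2)] := by simp [invw]
    rw [this, evalWord_append, ih]
    obtain ⟨i, b⟩ := p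
    cases b <;> simp [evalWord, mul_comm]

theorem exists_word (hgen : Subgroup.closure (Set.range X) = ⊤) (g : G) :
    ∃ w : List (Fin n × Bool), evalWord X w = g := by
  have hg : g ∈ Subgroup.closure (Set.range X) := hgen ▸ Subgroup.mem_top g
  refine Subgroup.closure_induction ?_ ?_ ?_ ?_ hg
  · rintro x ⟨i, rfl⟩; exact ⟨[(i, true)], by simp [evalWord]⟩
  · exact ⟨[], by simp [evalWord]⟩
  · rintro x y _ _ ⟨u, rfl⟩ ⟨v, rfl⟩
    exact ⟨u ++ v, evalWord_append X u v⟩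
  · rintro x _ ⟨u, rfl⟩
    exact ⟨invw u, evalWord_invw X u⟩

/-- The word over `X` associated to an `S`-index list, via a table of words. -/
def wordOf (T : List (List (Fin n × Bool))) (l : List (Fin k)) : List (Fin n × Bool) :=
  l.flatMap fun i => T.getD i.val []

theorem evalWord_wordOf {T : List (List (Fin n × Bool))}
    (hT : ∀ i : Fin k, evalWord X (T.getD i.val []) = S i) (l : List (Fin k)) :
    evalWord X (wordOf T l) = (l.map S).prod := by
  induction l with
  | nil => simp [wordOf, evalWord]
  | cons a l ih =>
    rw [show wordOf T (a :: l) = T.getD a.val [] ++ wordOf T l by simp [wordOf],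
      evalWord_append, hT, ih]
    simp

theorem wordOf_primrec (T : List (List (Fin n × Bool))) : Primrec (wordOf (k := k) T) :=
  Primrec.list_flatMap Primrec.id
    ((Primrec.list_getD ([] : List (Fin n × Bool))).comp (Primrec.const T)
      (Primrec.fin_val.comp Primrec.snd))

theorem invw_primrec : Primrec (invw (n := n)) :=
  Primrec.list_reverse.comp
    (Primrec.list_map Primrec.id
      ((Primrec.fst.comp Primrec.snd).pair
        ((Primrec.dom_bool not).comp (Primrec.snd.comp Primrec.snd))))

omit [Group G] in
theorem exists_index_list {L : List G} (h : ∀ a ∈ L, a ∈ Set.range S) :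
    ∃ l : List (Fin k), l.map S = L := by
  induction L with
  | nil => exact ⟨[], rfl⟩
  | cons a L ih =>
    obtain ⟨i, hi⟩ := h a List.mem_cons_self
    obtain ⟨l, hl⟩ := ih fun b hb => h b (List.mem_cons_of_mem a hb)
    exact ⟨i :: l, by simp [hl, hi]⟩

theorem mem_closure_of_list (l : List (Fin k)) :
    (l.map S).prod ∈ Submonoid.closure (Set.range S) :=
  Submonoid.list_prod_mem _ fun x hx => by
    obtain ⟨i, _, rfl⟩ := List.mem_map.mp hx
    exact Submonoid.subset_closure (Set.mem_range_self i)

theorem genLen_le {g : G} {l : List (Fin k)} (h : (l.map S).prod = g) :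
    genLen (Set.range S) g ≤ l.length :=
  Nat.sInf_le ⟨l.map S, fun a ha => by
    obtain ⟨i, _, rfl⟩ := List.mem_map.mp ha; exact Set.mem_range_self i, h, by simp⟩

theorem genLen_witness {g : G} (hg : g ∈ Submonoid.closure (Set.range S)) :
    ∃ l : List (Fin k), (l.map S).prod = g ∧ l.length = genLen (Set.range S) g := by
  obtain ⟨L0, hL0, hL0p⟩ := Submonoid.exists_list_of_mem_closure hg
  have hne : {m | ∃ l : List G, (∀ a ∈ l, a ∈ Set.range S) ∧ l.prod = g ∧ l.length = m}.Nonempty :=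
    ⟨L0.length, L0, hL0, hL0p, rfl⟩
  obtain ⟨L, hL, hLp, hLl⟩ := Nat.sInf_mem hne
  obtain ⟨l, rfl⟩ := exists_index_list S hL
  exact ⟨l, hLp, by simpa [genLen] using hLl⟩

end Words

end Stmt6Aux

open Stmt6Aux Encodable

/-- Let `G` be a group generated by `X` with decidable word problem, and let
`M` be the submonoid generated by a finite set `S`. Then membership in `M` is decidable iff
there exists a computable non-decreasing distortion function `δ` with
`|g|_S ≤ δ(|g|_X)` for all `g ∈ M`. -/
theorem stmt6 {G : Type*} [Group G] {n k : ℕ}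
    (X : Fin n → G) (hgen : Subgroup.closure (Set.range X) = ⊤)
    (hwp : ComputablePred fun w : List (Fin n × Bool) => evalWord X w = 1)
    (S : Fin k → G) :
    (ComputablePred fun w : List (Fin n × Bool) =>
        evalWord X w ∈ Submonoid.closure (Set.range S)) ↔
      ∃ δ : ℕ → ℕ, Computable δ ∧ Monotone δ ∧
        ∀ g ∈ Submonoid.closure (Set.range S),
          genLen (Set.range S) g ≤ δ (wordLen X g) := by
  classical
  obtain ⟨wp, hwpc, hwpe⟩ := ComputablePred.computable_iff.mp hwp
  have hwp1 : ∀ w, wp w = true ↔ evalWord X w = 1 := fun w =>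
    (iff_of_eq (congrFun hwpe w)).symm
  -- choose a table of words representing the generators of S
  choose rep hrep using fun i : Fin k => exists_word X hgen (S i)
  set T : List (List (Fin n × Bool)) := List.ofFn rep with hTdef
  have hTd : ∀ i : Fin k, T.getD i.val [] = rep i := by
    intro i
    simp [hTdef, List.getD_eq_getElem?_getD, List.getElem?_ofFn, List.ofFnNthVal, i.isLt]
  have hTe : ∀ i : Fin k, evalWord X (T.getD i.val []) = S i := fun i => by
    rw [hTd i, hrep i]
  have key : ∀ (w : List (Fin n × Bool)) (l : List (Fin k)),
      wp (wordOf T l ++ invw w) = true ↔ (l.map S).prod = evalWord X w := by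
    intro w l
    rw [hwp1, evalWord_append, evalWord_wordOf X S hTe, evalWord_invw, mul_inv_eq_one]
  have hkS : ∀ i : Fin k, encode i ≤ k := fun i => i.isLt.le
  constructor
  · -- decidable membership → distortion function
    intro hdec
    obtain ⟨mb, hmbc, hmbe⟩ := ComputablePred.computable_iff.mp hdec
    have hmb : ∀ w, mb w = true ↔ evalWord X w ∈ Submonoid.closure (Set.range S) :=
      fun w => (iff_of_eq (congrFun hmbe w)).symm
    -- P (w, t) = "∃ S-index list of length ≤ t whose product is evalWord X w"
    set chk2 : (List (Fin n × Bool) × ℕ) × ℕ → Bool := fun q =>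
      (decode (α := List (Fin k)) q.2).casesOn false
        (fun l => decide (l.length ≤ q.1.2) && wp (wordOf T l ++ invw q.1.1)) with hchk2
    have hchk2c : Computable chk2 := by
      apply Computable.option_casesOn (Computable.decode.comp Computable.snd)
        (Computable.const false)
      have hand : Computable₂ fun (x y : Bool) => x && y := (Primrec.dom_bool₂ _).to_comp
      exact hand.comp
        ((Primrec.nat_le.comp (Primrec.list_length.comp Primrec.snd)
          (Primrec.snd.comp (Primrec.fst.comp Primrec.fst))).decide.to_comp)
        (hwpc.comp ((Primrec.list_append.comp
          ((wordOf_primrec T).comp Primrec.snd)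
          (invw_primrec.comp (Primrec.fst.comp (Primrec.fst.comp Primrec.fst)))).to_comp))
    set P : List (Fin n × Bool) × ℕ → Bool := fun p =>
      bany (fun m => chk2 (p, m)) (boundL k p.2) with hPdef
    have hPc : Computable P :=
      bany_computable hchk2c.to₂ ((boundL_computable k).comp Computable.snd)
    have Pspec : ∀ (w : List (Fin n × Bool)) (t : ℕ), P (w, t) = true ↔
        ∃ l : List (Fin k), l.length ≤ t ∧ (l.map S).prod = evalWord X w := by
      intro w t
      rw [hPdef]
      simp only [bany_eq_true]
      constructor
      · rintro ⟨m, _, hm⟩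
        rw [hchk2] at hm
        cases hd : decode (α := List (Fin k)) m with
        | none => simp [hd] at hm
        | some l =>
          simp only [hd, Bool.and_eq_true, decide_eq_true_eq] at hm
          exact ⟨l, hm.1, (key w l).mp hm.2⟩
      · rintro ⟨l, hl, hprod⟩
        refine ⟨encode l, encode_le_boundL hkS l t hl, ?_⟩
        show (decode (α := List (Fin k)) (encode l)).casesOn false
          (fun l' => decide (l'.length ≤ t) && wp (wordOf T l' ++ invw w)) = true
        rw [encodek]
        simp only [Bool.and_eq_true, decide_eq_true_eq]
        exact ⟨hl, (key w l).mpr hprod⟩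
    -- total computable "genLen of evalWord" function
    set G0 : List (Fin n × Bool) → ℕ := fun w =>
      if mb w = true then genLen (Set.range S) (evalWord X w) else 0 with hG0def
    have hG0c : Computable G0 := by
      have hpart : Partrec fun w : List (Fin n × Bool) =>
          cond (mb w) (Nat.rfind fun t => Part.some (P (w, t))) (Part.some 0) :=
        Partrec.cond hmbc (Partrec.rfind (hPc.to₂.partrec₂))
          ((Computable.const 0).partrec)
      apply hpart.of_eq_tot
      intro w
      cases hmw : mb w with
      | false => simp [hG0def, hmw]
      | true =>
        simp only [hG0def, hmw, if_true, eq_self_iff_true, cond_true]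
        have hgmem : evalWord X w ∈ Submonoid.closure (Set.range S) := (hmb w).mp hmw
        refine Nat.mem_rfind.mpr ⟨?_, ?_⟩
        · rw [Part.mem_some_iff]
          symm
          rw [Pspec]
          obtain ⟨l, hlp, hll⟩ := genLen_witness S hgmem
          exact ⟨l, hll.le, hlp⟩
        · intro m hm
          rw [Part.mem_some_iff]
          symm
          rw [Bool.eq_false_iff, Ne, Pspec]
          rintro ⟨l, hl, hprod⟩
          exact absurd ((genLen_le S hprod).trans hl) (Nat.not_le.mpr hm)
    -- define δ
    set val : ℕ → ℕ → ℕ := fun m j =>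
      (decode (α := List (Fin n × Bool)) j).casesOn 0
        (fun w => cond (decide (w.length ≤ m)) (G0 w) 0) with hvaldef
    have hvalc : Computable₂ val := by
      apply Computable.option_casesOn (Computable.decode.comp Computable.snd)
        (Computable.const 0)
      exact (Computable.cond
        ((Primrec.nat_le.comp (Primrec.list_length.comp Primrec.snd)
          (Primrec.fst.comp Primrec.fst)).decide.to_comp)
        (hG0c.comp Computable.snd) (Computable.const 0)).to₂
    set δ : ℕ → ℕ := fun m => bmaxf (val m) (boundL (Nat.pair n 1) m) with hδdef
    have hδc : Computable δ :=
      bmaxf_computable hvalc ((boundL_computable _).comp Computable.id)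
    have hvmono : ∀ {m m'} (_ : m ≤ m') (j : ℕ), val m j ≤ val m' j := by
      intro m m' hmm j
      simp only [hvaldef]
      cases decode (α := List (Fin n × Bool)) j with
      | none => exact le_rfl
      | some w =>
        by_cases hlw : w.length ≤ m
        · simp [hlw, hlw.trans hmm]
        · simp only [hlw, decide_false, cond_false]
          exact Nat.zero_le _
    refine ⟨δ, hδc, ?_, ?_⟩
    · intro m m' hmm
      exact bmaxf_mono (hvmono hmm) (boundL_mono _ hmm)
    · intro g hg
      obtain ⟨w0, hw0⟩ := exists_word X hgen g
      obtain ⟨w, hw, hwl⟩ :=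
        Nat.sInf_mem (s := {m | ∃ w : List (Fin n × Bool), evalWord X w = g ∧ w.length = m})
          ⟨w0.length, w0, hw0, rfl⟩
      have hpn : ∀ p : Fin n × Bool, encode p ≤ Nat.pair n 1 := by
        rintro ⟨i, b⟩
        rw [Encodable.encode_prod_val]
        refine pair_mono i.isLt.le ?_
        cases b <;> simp [Encodable.encode_true, Encodable.encode_false]
      have henc : encode w ≤ boundL (Nat.pair n 1) (wordLen X g) :=
        encode_le_boundL hpn w _ (le_of_eq hwl)
      have hval_eq : val (wordLen X g) (encode w) = genLen (Set.range S) g := by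
        rw [hvaldef]
        simp only [encodek]
        have hlen : w.length ≤ wordLen X g := le_of_eq hwl
        have hmbw : mb w = true := (hmb w).mpr (hw ▸ hg)
        simp [hlen, hG0def, hmbw, hw]
      calc genLen (Set.range S) g = val (wordLen X g) (encode w) := hval_eq.symm
        _ ≤ δ (wordLen X g) := le_bmaxf henc
  · -- distortion function → decidable membership
    rintro ⟨δ, hδc, hδm, hδd⟩
    set chk1 : List (Fin n × Bool) × ℕ → Bool := fun q =>
      (decode (α := List (Fin k)) q.2).casesOn false
        (fun l => wp (wordOf T l ++ invw q.1)) with hchk1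
    have hchk1c : Computable chk1 := by
      apply Computable.option_casesOn (Computable.decode.comp Computable.snd)
        (Computable.const false)
      exact (hwpc.comp ((Primrec.list_append.comp
        ((wordOf_primrec T).comp Primrec.snd)
        (invw_primrec.comp (Primrec.fst.comp Primrec.fst))).to_comp)).to₂
    set F : List (Fin n × Bool) → Bool := fun w =>
      bany (fun m => chk1 (w, m)) (boundL k (δ w.length)) with hFdef
    have hFc : Computable F :=
      bany_computable hchk1c.to₂
        ((boundL_computable k).comp (hδc.comp Primrec.list_length.to_comp))
    have hFcorrect : ∀ w, evalWord X w ∈ Submonoid.closure (Set.range S) ↔ F w = true := by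
      intro w
      rw [hFdef]
      simp only [bany_eq_true]
      constructor
      · intro hg
        obtain ⟨l, hlp, hll⟩ := genLen_witness S hg
        have hwlen : wordLen X (evalWord X w) ≤ w.length := Nat.sInf_le ⟨w, rfl, rfl⟩
        have hlb : l.length ≤ δ w.length := by
          rw [hll]
          exact (hδd _ hg).trans (hδm hwlen)
        refine ⟨encode l, encode_le_boundL hkS l _ hlb, ?_⟩
        show (decode (α := List (Fin k)) (encode l)).casesOn false
          (fun l' => wp (wordOf T l' ++ invw w)) = true
        rw [encodek]
        exact (key w l).mpr hlp
      · rintro ⟨m, _, hm⟩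
        rw [hchk1] at hm
        cases hd : decode (α := List (Fin k)) m with
        | none => simp [hd] at hm
        | some l =>
          simp only [hd] at hm
          have := (key w l).mp hm
          rw [← this]
          exact mem_closure_of_list S l
    rw [ComputablePred.computable_iff]
    exact ⟨F, hFc, funext fun w => propext ((hFcorrect w).trans (by simp))⟩
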